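/- For τ ∈ (0,1) and 0 < ε ≤ (1/2)·min(τ,1-τ), the capacity C_{τ,ε} := max over q ∈ [0,1] of H(τ + (2q-1)ε) - q·H(τ+ε) - (1-q)·H(τ-ε) satisfies C_{τ,ε} ≥ ε²/(2·ln 2·τ·(1-τ)). -/

import Mathlib

noncomputable def binEntropy (x : ℝ) : ℝ :=
  -(x * Real.logb 2 x) - (1 - x) * Real.logb 2 (1 - x)

noncomputable def capacity (τ ε : ℝ) : ℝ :=
  sSup {y | ∃ q ∈ Set.Icc (0 : ℝ) 1,
    y = binEntropy ((1 - q) * (τ - ε) + q * (τ + ε))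
        - (1 - q) * binEntropy (τ - ε) - q * binEntropy (τ + ε)}

-- derivative-based: log(1+u) - log(1-u) - 2u ≥ 0 on [0, 1/2]
lemma aux_G (u : ℝ) (hu : u ∈ Set.Icc (0:ℝ) (1/2)) :
    0 ≤ Real.log (1+u) - Real.log (1-u) - 2*u := by
  set G : ℝ → ℝ := fun x => Real.log (1+x) - Real.log (1-x) - 2*x with hGdef
  have key : ∀ x ∈ Set.Icc (0:ℝ) (1/2), (1:ℝ) + x ≠ 0 ∧ (1:ℝ) - x ≠ 0 := by
    intro x hx; constructor <;> nlinarith [hx.1, hx.2]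
  have hderiv : ∀ x ∈ Set.Icc (0:ℝ) (1/2),
      HasDerivAt G (1/(1+x) + 1/(1-x) - 2) x := by
    intro x hx
    obtain ⟨h1, h2⟩ := key x hx
    have d1 : HasDerivAt (fun y : ℝ => Real.log (1+y)) (1/(1+x)) x := by
      have := (Real.hasDerivAt_log h1).comp x ((hasDerivAt_id x).const_add 1)
      simpa [one_div, Function.comp_def] using this
    have d2 : HasDerivAt (fun y : ℝ => Real.log (1-y)) (-(1/(1-x))) x := by
      have hlin : HasDerivAt (fun y : ℝ => 1 - y) (-1) x := by
        simpa using ((hasDerivAt_id x).const_sub 1)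
      have := (Real.hasDerivAt_log h2).comp x hlin
      simp [Function.comp_def] at this
      simpa [one_div] using this
    have d3 : HasDerivAt (fun y : ℝ => 2*y) 2 x := by
      simpa using (hasDerivAt_id x).const_mul 2
    have := (d1.sub d2).sub d3
    refine this.congr_deriv ?_
    ring
  have hmono : MonotoneOn G (Set.Icc (0:ℝ) (1/2)) := by
    apply monotoneOn_of_deriv_nonneg (convex_Icc _ _)
    · exact fun x hx => (hderiv x hx).continuousAt.continuousWithinAt
    · intro x hx
      rw [interior_Icc] at hx
      exact (hderiv x (Set.mem_Icc_of_Ioo hx)).differentiableAt.differentiableWithinAt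
    · intro x hx
      rw [interior_Icc] at hx
      rw [(hderiv x (Set.mem_Icc_of_Ioo hx)).deriv]
      have h1 : (0:ℝ) < 1 + x := by nlinarith [hx.1, hx.2]
      have h2 : (0:ℝ) < 1 - x := by nlinarith [hx.1, hx.2]
      rw [div_add_div _ _ (ne_of_gt h1) (ne_of_gt h2), sub_nonneg, le_div_iff₀ (by positivity)]
      nlinarith [sq_nonneg x]
  have h0 : G 0 = 0 := by simp [hGdef]
  have := hmono (Set.left_mem_Icc.mpr (by norm_num)) hu hu.1
  rw [h0] at this
  exact this

lemma aux_F (u : ℝ) (hu : u ∈ Set.Icc (0:ℝ) (1/2)) :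
    u^2 ≤ (1+u) * Real.log (1+u) + (1-u) * Real.log (1-u) := by
  set F : ℝ → ℝ := fun x => (1+x) * Real.log (1+x) + (1-x) * Real.log (1-x) - x^2 with hFdef
  have hderiv : ∀ x ∈ Set.Icc (0:ℝ) (1/2),
      HasDerivAt F (Real.log (1+x) - Real.log (1-x) - 2*x) x := by
    intro x hx
    have h1 : (0:ℝ) < 1 + x := by nlinarith [hx.1, hx.2]
    have h2 : (0:ℝ) < 1 - x := by nlinarith [hx.1, hx.2]
    have l1 : HasDerivAt (fun y : ℝ => Real.log (1+y)) (1/(1+x)) x := by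
      have := (Real.hasDerivAt_log h1.ne').comp x ((hasDerivAt_id x).const_add 1)
      simpa [one_div, Function.comp_def] using this
    have l2 : HasDerivAt (fun y : ℝ => Real.log (1-y)) (-(1/(1-x))) x := by
      have hlin : HasDerivAt (fun y : ℝ => 1 - y) (-1) x := by
        simpa using ((hasDerivAt_id x).const_sub 1)
      have := (Real.hasDerivAt_log h2.ne').comp x hlin
      simp [Function.comp_def] at this
      simpa [one_div] using this
    have d1 : HasDerivAt (fun y : ℝ => (1+y) * Real.log (1+y))
        (1 * Real.log (1+x) + (1+x) * (1/(1+x))) x :=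
      (((hasDerivAt_id x).const_add 1)).mul l1
    have d2 : HasDerivAt (fun y : ℝ => (1-y) * Real.log (1-y))
        ((-1) * Real.log (1-x) + (1-x) * (-(1/(1-x)))) x := by
      have hlin : HasDerivAt (fun y : ℝ => 1 - y) (-1) x := by
        simpa using ((hasDerivAt_id x).const_sub 1)
      exact hlin.mul l2
    have d3 : HasDerivAt (fun y : ℝ => y^2) (2*x) x := by
      simpa using (hasDerivAt_pow 2 x)
    have := (d1.add d2).sub d3
    refine this.congr_deriv ?_
    field_simp
    ring
  have hmono : MonotoneOn F (Set.Icc (0:ℝ) (1/2)) := by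
    apply monotoneOn_of_deriv_nonneg (convex_Icc _ _)
    · exact fun x hx => (hderiv x hx).continuousAt.continuousWithinAt
    · intro x hx
      rw [interior_Icc] at hx
      exact (hderiv x (Set.mem_Icc_of_Ioo hx)).differentiableAt.differentiableWithinAt
    · intro x hx
      rw [interior_Icc] at hx
      rw [(hderiv x (Set.mem_Icc_of_Ioo hx)).deriv]
      exact aux_G x (Set.mem_Icc_of_Ioo hx)
  have h0 : F 0 = 0 := by simp [hFdef]
  have := hmono (Set.left_mem_Icc.mpr (by norm_num)) hu hu.1
  rw [h0] at this
  have : 0 ≤ (1+u) * Real.log (1+u) + (1-u) * Real.log (1-u) - u^2 := this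
  linarith

lemma aux_C (a e : ℝ) (ha : 0 < a) (he0 : 0 ≤ e) (he : e ≤ a/2) :
    e^2/a ≤ (a+e) * Real.log (a+e) + (a-e) * Real.log (a-e) - 2*a*Real.log a := by
  set u := e/a with hudef
  have hu : u ∈ Set.Icc (0:ℝ) (1/2) := by
    constructor
    · positivity
    · rw [hudef, div_le_iff₀ ha]; linarith
  have h1 : (0:ℝ) < 1 + u := by nlinarith [hu.1, hu.2]
  have h2 : (0:ℝ) < 1 - u := by nlinarith [hu.1, hu.2]
  have hae : a + e = a * (1+u) := by rw [hudef]; field_simp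
  have hae' : a - e = a * (1-u) := by rw [hudef]; field_simp
  have l1 : Real.log (a+e) = Real.log a + Real.log (1+u) := by
    rw [hae, Real.log_mul ha.ne' h1.ne']
  have l2 : Real.log (a-e) = Real.log a + Real.log (1-u) := by
    rw [hae', Real.log_mul ha.ne' h2.ne']
  have key := aux_F u hu
  have he2 : e^2/a = a * u^2 := by rw [hudef]; field_simp
  rw [l1, l2, hae, hae', he2]
  nlinarith [key, ha]

theorem capacity_lower_bound (τ ε : ℝ) (hτ0 : 0 < τ) (hτ1 : τ < 1)
    (hε0 : 0 < ε) (hε : ε ≤ (1/2) * min τ (1 - τ)) :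
    capacity τ ε ≥ ε ^ 2 / (2 * Real.log 2 * τ * (1 - τ)) := by
  have hε1 : ε ≤ τ/2 := by
    have := min_le_left τ (1-τ); linarith
  have hε2 : ε ≤ (1-τ)/2 := by
    have := min_le_right τ (1-τ); linarith
  have hp1 : 0 < τ - ε := by linarith
  have hp2 : 0 < τ + ε := by linarith
  have hp3 : 0 < 1 - τ - ε := by linarith
  have hp4 : 0 < 1 - τ + ε := by linarith
  set l2 := Real.log 2 with hl2
  have hl2pos : 0 < l2 := Real.log_pos (by norm_num)
  set f : ℝ → ℝ := fun q => binEntropy ((1 - q) * (τ - ε) + q * (τ + ε))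
        - (1 - q) * binEntropy (τ - ε) - q * binEntropy (τ + ε) with hfdef
  set S := {y | ∃ q ∈ Set.Icc (0 : ℝ) 1,
    y = binEntropy ((1 - q) * (τ - ε) + q * (τ + ε))
        - (1 - q) * binEntropy (τ - ε) - q * binEntropy (τ + ε)} with hSdef
  have hS : S = f '' Set.Icc (0:ℝ) 1 := by
    ext y; simp [hSdef, hfdef, Set.mem_image, eq_comm]
  -- continuity of f on [0,1]
  set L : ℝ → ℝ := fun q => (1 - q) * (τ - ε) + q * (τ + ε) with hLdef
  have hL : Continuous L := by unfold L; continuity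
  have hLpos : ∀ q ∈ Set.Icc (0:ℝ) 1, 0 < L q := by
    intro q hq; obtain ⟨h0, h1⟩ := hq
    have hLq : L q = (1 - q) * (τ - ε) + q * (τ + ε) := rfl
    rw [hLq]; nlinarith
  have hLlt : ∀ q ∈ Set.Icc (0:ℝ) 1, 0 < 1 - L q := by
    intro q hq; obtain ⟨h0, h1⟩ := hq
    have hLq : L q = (1 - q) * (τ - ε) + q * (τ + ε) := rfl
    rw [hLq]; nlinarith
  have hlogL : ContinuousOn (fun q => Real.log (L q)) (Set.Icc (0:ℝ) 1) :=
    ContinuousOn.log hL.continuousOn (fun q hq => (hLpos q hq).ne')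
  have hlogL' : ContinuousOn (fun q => Real.log (1 - L q)) (Set.Icc (0:ℝ) 1) :=
    ContinuousOn.log (continuous_const.sub hL).continuousOn (fun q hq => (hLlt q hq).ne')
  have hcont : ContinuousOn f (Set.Icc (0:ℝ) 1) := by
    have : f = fun q => -(L q * (Real.log (L q) / l2)) - (1 - L q) * (Real.log (1 - L q) / l2)
        - (1 - q) * binEntropy (τ - ε) - q * binEntropy (τ + ε) := by
      funext q; simp [hfdef, binEntropy, Real.logb, hLdef, hl2]
    rw [this]
    apply ContinuousOn.sub
    apply ContinuousOn.sub
    apply ContinuousOn.sub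
    · exact (hL.continuousOn.mul (hlogL.div_const _)).neg
    · exact (continuous_const.sub hL).continuousOn.mul (hlogL'.div_const _)
    · exact ((continuous_const.sub continuous_id).mul continuous_const).continuousOn
    · exact (continuous_id.mul continuous_const).continuousOn
  have hbdd : BddAbove S := by
    rw [hS]; exact (isCompact_Icc.image_of_continuousOn hcont).bddAbove
  have hmem : f (1/2) ∈ S := by
    rw [hS]; exact Set.mem_image_of_mem f (by norm_num)
  have hcap : f (1/2) ≤ capacity τ ε := le_csSup hbdd hmem
  -- now bound f (1/2)
  have harg : (1 - (1/2:ℝ)) * (τ - ε) + (1/2) * (τ + ε) = τ := by ring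
  have key1 := aux_C τ ε hτ0 hε0.le hε1
  have key2 := aux_C (1-τ) ε (by linarith) hε0.le hε2
  set A := (τ+ε) * Real.log (τ+ε) + (τ-ε) * Real.log (τ-ε) - 2*τ*Real.log τ with hA
  set B := ((1-τ)+ε) * Real.log ((1-τ)+ε) + ((1-τ)-ε) * Real.log ((1-τ)-ε)
      - 2*(1-τ)*Real.log (1-τ) with hB
  have hfval : f (1/2) = (A + B) / (2*l2) := by
    rw [hfdef]
    simp only [harg]
    simp only [binEntropy, Real.logb, hA, hB, hl2]
    have h1τ : (1:ℝ) - (τ-ε) = (1-τ)+ε := by ring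
    have h2τ : (1:ℝ) - (τ+ε) = (1-τ)-ε := by ring
    rw [h1τ, h2τ]
    field_simp
    ring
  have hsum : ε^2/τ + ε^2/(1-τ) = ε^2/(τ*(1-τ)) := by
    have h1 : τ ≠ 0 := hτ0.ne'
    have h2 : (1:ℝ) - τ ≠ 0 := by linarith
    field_simp
    ring
  have hAB : ε^2/(τ*(1-τ)) ≤ A + B := by
    rw [← hsum]
    exact add_le_add key1 key2
  have hlast : ε ^ 2 / (2 * l2 * τ * (1 - τ)) ≤ f (1/2) := by
    rw [hfval]
    have heq : ε ^ 2 / (2 * l2 * τ * (1 - τ)) = (ε^2/(τ*(1-τ))) / (2*l2) := by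
      rw [div_div]; ring_nf
    rw [heq]
    gcongr
  exact le_trans hlast hcap
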